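/- Let α = (α₁,α₂,α₃) be a real 3-vector with α₁ ≥ α₂ ≥ |α₃| and α₁ > 0. Then min( inf{ t ≥ 0 : t·α ≻_s (π/4, π/4, π/4) }, inf{ t ≥ 0 : t·α ≻_s (π/4, π/4, −π/4) } ) = (3π/4)/(α₁ + α₂ + |α₃|), and the infimum is attained; moreover the first infimum is the smaller one when α₃ > 0 and the second is the smaller one when α₃ < 0. (Interaction cost of the SWAP gate, whose interaction content is (π/4, π/4, π/4) with the shifted alternative (π/4, π/4, −π/4).) -/

import Mathlib

open Matrix Complex Real NormedSpace

noncomputable section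

/-- Pauli matrix `σ₁`. -/
def σ1 : Matrix (Fin 2) (Fin 2) ℂ := !![0, 1; 1, 0]
/-- Pauli matrix `σ₂`. -/
def σ2 : Matrix (Fin 2) (Fin 2) ℂ := !![0, -I; I, 0]
/-- Pauli matrix `σ₃`. -/
def σ3 : Matrix (Fin 2) (Fin 2) ℂ := !![1, 0; 0, -1]

/-- Kronecker product of two `2×2` matrices as a `4×4` matrix, with the index ordering
`|00⟩,|01⟩,|10⟩,|11⟩` (i.e. index `2*i+j` corresponds to `|i⟩⊗|j⟩`). -/
def kron (A B : Matrix (Fin 2) (Fin 2) ℂ) : Matrix (Fin 4) (Fin 4) ℂ :=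
  Matrix.of fun i j =>
    A ⟨i.val / 2, by have := i.isLt; omega⟩ ⟨j.val / 2, by have := j.isLt; omega⟩ *
      B ⟨i.val % 2, by have := i.isLt; omega⟩ ⟨j.val % 2, by have := j.isLt; omega⟩

/-- The Hamiltonian `H_α = α₁ σ₁⊗σ₁ + α₂ σ₂⊗σ₂ + α₃ σ₃⊗σ₃`. -/
def Hmat (a : Fin 3 → ℝ) : Matrix (Fin 4) (Fin 4) ℂ :=
  (a 0 : ℂ) • kron σ1 σ1 + (a 1 : ℂ) • kron σ2 σ2 + (a 2 : ℂ) • kron σ3 σ3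

/-- The magic basis matrix: column `j` is the `j`-th magic basis vector, written in the
computational basis `|00⟩,|01⟩,|10⟩,|11⟩`. -/
def Mmag : Matrix (Fin 4) (Fin 4) ℂ :=
  !![0,                      1 / (Real.sqrt 2 : ℂ), -I / (Real.sqrt 2 : ℂ), 0;
     -I / (Real.sqrt 2 : ℂ), 0,                     0,                      1 / (Real.sqrt 2 : ℂ);
     -I / (Real.sqrt 2 : ℂ), 0,                     0,                      -(1 / (Real.sqrt 2 : ℂ));
     0,                      1 / (Real.sqrt 2 : ℂ), I / (Real.sqrt 2 : ℂ),  0]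

/-- `λ(α) = (α₁+α₂−α₃, α₁−α₂+α₃, −α₁+α₂+α₃, −α₁−α₂−α₃)`, the vector of eigenvalues of `H_α`
in the magic basis. -/
def lamv (a : Fin 3 → ℝ) : Fin 4 → ℝ :=
  ![a 0 + a 1 - a 2, a 0 - a 1 + a 2, -a 0 + a 1 + a 2, -a 0 - a 1 - a 2]

/-- The s-ordered form of a real 3-vector: the absolute values rearranged in nonincreasing
order, with the third component carrying the sign of the product `v₀v₁v₂`. -/
def sOrd (v : Fin 3 → ℝ) : Fin 3 → ℝ :=
  ![max |v 0| (max |v 1| |v 2|),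
    |v 0| + |v 1| + |v 2| - max |v 0| (max |v 1| |v 2|) - min |v 0| (min |v 1| |v 2|),
    if v 0 * v 1 * v 2 < 0 then -(min |v 0| (min |v 1| |v 2|))
    else min |v 0| (min |v 1| |v 2|)]

/-- `x` s-majorizes `y`, written for the s-ordered forms:
`x^s₁ ≥ y^s₁`, `x^s₁+x^s₂−x^s₃ ≥ y^s₁+y^s₂−y^s₃` and `x^s₁+x^s₂+x^s₃ ≥ y^s₁+y^s₂+y^s₃`. -/
def sMaj (x y : Fin 3 → ℝ) : Prop :=
  sOrd y 0 ≤ sOrd x 0 ∧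
    sOrd y 0 + sOrd y 1 - sOrd y 2 ≤ sOrd x 0 + sOrd x 1 - sOrd x 2 ∧
    sOrd y 0 + sOrd y 1 + sOrd y 2 ≤ sOrd x 0 + sOrd x 1 + sOrd x 2

lemma sOrd_smul (α : Fin 3 → ℝ) (ha1 : α 1 ≤ α 0) (ha2 : |α 2| ≤ α 1) {t : ℝ} (ht : 0 ≤ t) :
    sOrd (t • α) = ![t * α 0, t * α 1, t * α 2] := by
  have hab := abs_le.mp ha2
  have h1 : 0 ≤ α 1 := (abs_nonneg _).trans ha2
  have h0 : 0 ≤ α 0 := h1.trans ha1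
  have e0 : |t * α 0| = t * α 0 := abs_of_nonneg (by positivity)
  have e1 : |t * α 1| = t * α 1 := abs_of_nonneg (by positivity)
  have e2 : |t * α 2| = t * |α 2| := by rw [abs_mul, _root_.abs_of_nonneg ht]
  have hm1 : max |t * α 1| |t * α 2| = t * α 1 := by
    rw [e1, e2]; exact max_eq_left (by nlinarith)
  have hm0 : max |t * α 0| (max |t * α 1| |t * α 2|) = t * α 0 := by
    rw [hm1, e0]; exact max_eq_left (by nlinarith)
  have hn1 : min |t * α 1| |t * α 2| = t * |α 2| := by
    rw [e1, e2]; exact min_eq_right (by nlinarith)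
  have hn0 : min |t * α 0| (min |t * α 1| |t * α 2|) = t * |α 2| := by
    rw [hn1, e0]; refine min_eq_right ?_
    have : |α 2| ≤ α 0 := ha2.trans ha1
    nlinarith
  funext i
  fin_cases i
  · show sOrd (t • α) 0 = t * α 0
    simp only [sOrd, Pi.smul_apply, smul_eq_mul, Matrix.cons_val_zero]
    simpa using hm0
  · show sOrd (t • α) 1 = t * α 1
    simp only [sOrd, Pi.smul_apply, smul_eq_mul, Matrix.cons_val_one, Matrix.head_cons,
      Matrix.cons_val_zero]
    rw [hm0, hn0, e2] at *
    nlinarith [e0, e1]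
  · show sOrd (t • α) 2 = t * α 2
    simp only [sOrd, Pi.smul_apply, smul_eq_mul]
    have h2 : (![max |t * α 0| (max |t * α 1| |t * α 2|),
        |t * α 0| + |t * α 1| + |t * α 2| - max |t * α 0| (max |t * α 1| |t * α 2|) -
          min |t * α 0| (min |t * α 1| |t * α 2|),
        if t * α 0 * (t * α 1) * (t * α 2) < 0 then -(min |t * α 0| (min |t * α 1| |t * α 2|))
        else min |t * α 0| (min |t * α 1| |t * α 2|)] : Fin 3 → ℝ) 2 =
        if t * α 0 * (t * α 1) * (t * α 2) < 0 then -(min |t * α 0| (min |t * α 1| |t * α 2|))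
        else min |t * α 0| (min |t * α 1| |t * α 2|) := rfl
    rw [h2, hn0]
    split_ifs with h
    · have ha2neg : α 2 < 0 := by
        by_contra h'
        push_neg at h'
        nlinarith [mul_nonneg (mul_nonneg (mul_nonneg ht h0) (mul_nonneg ht h1)) (mul_nonneg ht h')]
      rw [abs_of_neg ha2neg]; ring
    · push_neg at h
      rcases le_or_gt 0 (α 2) with h' | h'
      · rw [_root_.abs_of_nonneg h']
      · rcases ht.eq_or_lt with rfl | ht'
        · simp
        · exfalso
          have h1' : 0 < α 1 := lt_of_lt_of_le (abs_pos.mpr h'.ne) ha2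
          have h0' : 0 < α 0 := lt_of_lt_of_le h1' ha1
          have : t * α 0 * (t * α 1) * (t * α 2) < 0 :=
            mul_neg_of_pos_of_neg (mul_pos (mul_pos ht' h0') (mul_pos ht' h1'))
              (mul_neg_of_pos_of_neg ht' h')
          linarith

lemma sOrd_targetP : sOrd ![π / 4, π / 4, π / 4] = ![π / 4, π / 4, π / 4] := by
  have h : |π / 4| = π / 4 := abs_of_pos (by positivity)
  have hn : ¬ (π / 4 * (π / 4) * (π / 4) < 0) := by push_neg; positivity
  funext i
  fin_cases i <;>
    simp only [sOrd, Matrix.cons_val_zero, Matrix.cons_val_one, Matrix.head_cons,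
      Matrix.cons_val_two, Matrix.tail_cons, h, if_neg hn, Fin.isValue] <;>
    simp [max_self, min_self] <;> ring

lemma sOrd_targetM : sOrd ![π / 4, π / 4, -(π / 4)] = ![π / 4, π / 4, -(π / 4)] := by
  have h : |π / 4| = π / 4 := abs_of_pos (by positivity)
  have h' : |(-(π / 4))| = π / 4 := by rw [abs_neg, h]
  have h4 : (0:ℝ) < π / 4 := by positivity
  have hn : (π / 4 * (π / 4) * (-(π / 4)) < 0) := by nlinarith [mul_pos (mul_pos h4 h4) h4]
  funext i
  fin_cases i <;>
    simp only [sOrd, Matrix.cons_val_zero, Matrix.cons_val_one, Matrix.head_cons,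
      Matrix.cons_val_two, Matrix.tail_cons, h, h', if_pos hn, Fin.isValue] <;>
    simp [max_self, min_self] <;> ring

lemma sMajP_iff (α : Fin 3 → ℝ) (ha1 : α 1 ≤ α 0) (ha2 : |α 2| ≤ α 1) {t : ℝ} (ht : 0 ≤ t) :
    sMaj (t • α) ![π / 4, π / 4, π / 4] ↔
      π / 4 ≤ t * α 0 ∧ π / 4 ≤ t * α 0 + t * α 1 - t * α 2 ∧
        3 * π / 4 ≤ t * α 0 + t * α 1 + t * α 2 := by
  unfold sMaj
  rw [sOrd_smul α ha1 ha2 ht, sOrd_targetP]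
  simp only [Matrix.cons_val_zero, Matrix.cons_val_one, Matrix.head_cons, Matrix.cons_val_two,
    Matrix.tail_cons]
  constructor <;> rintro ⟨h1, h2, h3⟩ <;> exact ⟨by linarith, by linarith, by linarith⟩

lemma sMajM_iff (α : Fin 3 → ℝ) (ha1 : α 1 ≤ α 0) (ha2 : |α 2| ≤ α 1) {t : ℝ} (ht : 0 ≤ t) :
    sMaj (t • α) ![π / 4, π / 4, -(π / 4)] ↔
      π / 4 ≤ t * α 0 ∧ 3 * π / 4 ≤ t * α 0 + t * α 1 - t * α 2 ∧
        π / 4 ≤ t * α 0 + t * α 1 + t * α 2 := by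
  unfold sMaj
  rw [sOrd_smul α ha1 ha2 ht, sOrd_targetM]
  simp only [Matrix.cons_val_zero, Matrix.cons_val_one, Matrix.head_cons, Matrix.cons_val_two,
    Matrix.tail_cons]
  constructor <;> rintro ⟨h1, h2, h3⟩ <;> exact ⟨by linarith, by linarith, by linarith⟩

lemma setP_eq (α : Fin 3 → ℝ) (ha1 : α 1 ≤ α 0) (ha2 : |α 2| ≤ α 1) (ha0 : 0 < α 0) :
    { t : ℝ | 0 ≤ t ∧ sMaj (t • α) ![π / 4, π / 4, π / 4] } =
      Set.Ici (3 * π / 4 / (α 0 + α 1 + α 2)) := by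
  have hab := abs_le.mp ha2
  have h1 : 0 ≤ α 1 := (abs_nonneg _).trans ha2
  have hA : 0 < α 0 + α 1 + α 2 := by linarith
  ext t
  simp only [Set.mem_setOf_eq, Set.mem_Ici]
  constructor
  · rintro ⟨ht, hm⟩
    rw [sMajP_iff α ha1 ha2 ht] at hm
    rw [div_le_iff₀ hA]
    nlinarith [hm.2.2]
  · intro h
    have hc : 0 < 3 * π / 4 / (α 0 + α 1 + α 2) := by positivity
    have ht : 0 ≤ t := le_of_lt (lt_of_lt_of_le hc h)
    have h3 : 3 * π / 4 ≤ t * (α 0 + α 1 + α 2) := (div_le_iff₀ hA).mp h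
    refine ⟨ht, (sMajP_iff α ha1 ha2 ht).mpr ⟨?_, ?_, by nlinarith⟩⟩
    · nlinarith [mul_le_mul_of_nonneg_left (show α 1 + α 2 ≤ 2 * α 0 by linarith) ht]
    · nlinarith [mul_le_mul_of_nonneg_left
        (show α 0 + α 1 + α 2 ≤ 3 * (α 0 + α 1 - α 2) by linarith) ht]

lemma setM_eq (α : Fin 3 → ℝ) (ha1 : α 1 ≤ α 0) (ha2 : |α 2| ≤ α 1) (ha0 : 0 < α 0) :
    { t : ℝ | 0 ≤ t ∧ sMaj (t • α) ![π / 4, π / 4, -(π / 4)] } =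
      Set.Ici (3 * π / 4 / (α 0 + α 1 - α 2)) := by
  have hab := abs_le.mp ha2
  have h1 : 0 ≤ α 1 := (abs_nonneg _).trans ha2
  have hB : 0 < α 0 + α 1 - α 2 := by linarith
  ext t
  simp only [Set.mem_setOf_eq, Set.mem_Ici]
  constructor
  · rintro ⟨ht, hm⟩
    rw [sMajM_iff α ha1 ha2 ht] at hm
    rw [div_le_iff₀ hB]
    nlinarith [hm.2.1]
  · intro h
    have hc : 0 < 3 * π / 4 / (α 0 + α 1 - α 2) := by positivity
    have ht : 0 ≤ t := le_of_lt (lt_of_lt_of_le hc h)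
    have h3 : 3 * π / 4 ≤ t * (α 0 + α 1 - α 2) := (div_le_iff₀ hB).mp h
    refine ⟨ht, (sMajM_iff α ha1 ha2 ht).mpr ⟨?_, by nlinarith, ?_⟩⟩
    · nlinarith [mul_le_mul_of_nonneg_left (show α 1 - α 2 ≤ 2 * α 0 by linarith) ht]
    · nlinarith [mul_le_mul_of_nonneg_left
        (show α 0 + α 1 - α 2 ≤ 3 * (α 0 + α 1 + α 2) by linarith) ht]

theorem stmt14 (α : Fin 3 → ℝ)
    (ha1 : α 1 ≤ α 0) (ha2 : |α 2| ≤ α 1) (ha0 : 0 < α 0) :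
    min (sInf { t : ℝ | 0 ≤ t ∧ sMaj (t • α) ![π / 4, π / 4, π / 4] })
        (sInf { t : ℝ | 0 ≤ t ∧ sMaj (t • α) ![π / 4, π / 4, -(π / 4)] }) =
      3 * π / 4 / (α 0 + α 1 + |α 2|) ∧
    (3 * π / 4 / (α 0 + α 1 + |α 2|) ∈
      { t : ℝ | 0 ≤ t ∧ sMaj (t • α) ![π / 4, π / 4, π / 4] } ∪
      { t : ℝ | 0 ≤ t ∧ sMaj (t • α) ![π / 4, π / 4, -(π / 4)] }) ∧
    (0 < α 2 →
      sInf { t : ℝ | 0 ≤ t ∧ sMaj (t • α) ![π / 4, π / 4, π / 4] } <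
        sInf { t : ℝ | 0 ≤ t ∧ sMaj (t • α) ![π / 4, π / 4, -(π / 4)] }) ∧
    (α 2 < 0 →
      sInf { t : ℝ | 0 ≤ t ∧ sMaj (t • α) ![π / 4, π / 4, -(π / 4)] } <
        sInf { t : ℝ | 0 ≤ t ∧ sMaj (t • α) ![π / 4, π / 4, π / 4] }) := by
  have hab := abs_le.mp ha2
  have h1 : 0 ≤ α 1 := (abs_nonneg _).trans ha2
  have hA : 0 < α 0 + α 1 + α 2 := by linarith
  have hB : 0 < α 0 + α 1 - α 2 := by linarith
  have hpi : 0 < 3 * π / 4 := by positivity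
  rw [setP_eq α ha1 ha2 ha0, setM_eq α ha1 ha2 ha0, csInf_Ici, csInf_Ici]
  rcases le_or_gt 0 (α 2) with h2 | h2
  · have habs : |α 2| = α 2 := abs_of_nonneg h2
    rw [habs]
    refine ⟨?_, ?_, ?_, fun h => absurd h (not_lt.mpr h2)⟩
    · refine min_eq_left ?_
      rw [div_le_div_iff₀ hA hB]; nlinarith
    · exact Set.mem_union_left _ (Set.mem_Ici.mpr le_rfl)
    · intro h2'
      rw [div_lt_div_iff₀ hA hB]; nlinarith
  · have habs : |α 2| = -α 2 := abs_of_neg h2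
    rw [habs]
    refine ⟨?_, ?_, fun h => absurd h (not_lt.mpr h2.le), ?_⟩
    · refine min_eq_right ?_
      rw [div_le_div_iff₀ hB hA]; nlinarith
    · exact Set.mem_union_right _ (Set.mem_Ici.mpr (le_of_eq (by ring)))
    · intro _
      rw [div_lt_div_iff₀ hB hA]; nlinarith
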